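/- Let k and r be positive integers with r | k and k ≥ 2r, and let χ: [1, rk-2r+1] → {0,1} be a 2-coloring with χ(1) = 0 and χ(r-1) = 0. Then there exist x₁,...,x_k in [1, rk-2r+1] with x₁ + ⋯ + x_{k-1} = x_k and ∑_{i=1}^k χ(x_i) ≡ 0 (mod r). -/

import Mathlib

lemma three_block_sum (A B n p q w : ℕ) (hA : A ≤ B) (hB : B ≤ n) :
    ∑ j ∈ Finset.range n, (if j < A then p else if j < B then q else w)
      = A * p + (B - A) * q + (n - B) * w := by
  rw [Finset.range_eq_Ico, ← Finset.sum_Ico_consecutive _ (Nat.zero_le B) hB,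
      ← Finset.sum_Ico_consecutive _ (Nat.zero_le A) hA]
  have c1 : ∀ j ∈ Finset.Ico 0 A, (if j < A then p else if j < B then q else w) = p := by
    intro j hj; rw [Finset.mem_Ico] at hj; rw [if_pos hj.2]
  have c2 : ∀ j ∈ Finset.Ico A B, (if j < A then p else if j < B then q else w) = q := by
    intro j hj; rw [Finset.mem_Ico] at hj; rw [if_neg (by omega), if_pos hj.2]
  have c3 : ∀ j ∈ Finset.Ico B n, (if j < A then p else if j < B then q else w) = w := by
    intro j hj; rw [Finset.mem_Ico] at hj; rw [if_neg (by omega), if_neg (by omega)]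
  rw [Finset.sum_congr rfl c1, Finset.sum_congr rfl c2, Finset.sum_congr rfl c3]
  simp [Nat.card_Ico, mul_comm]

theorem stmt2 (k r : ℕ) (hr : 0 < r) (hdvd : r ∣ k) (hkr : 2 * r ≤ k)
    (χ : ℕ → ℕ) (hχ : ∀ n ∈ Finset.Icc 1 (r * k - 2 * r + 1), χ n ≤ 1)
    (h1 : χ 1 = 0) (h2 : χ (r - 1) = 0) :
    ∃ (y : Fin (k - 1) → ℕ) (z : ℕ),
      (∀ i, y i ∈ Finset.Icc 1 (r * k - 2 * r + 1)) ∧ z ∈ Finset.Icc 1 (r * k - 2 * r + 1) ∧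
      (∑ i, y i) = z ∧ ((∑ i, χ (y i)) + χ z) % r = 0 := by
  rcases Nat.lt_or_ge r 2 with hr2 | hr2
  · -- r = 1 : everything is 0 mod 1
    have hr1 : r = 1 := by omega
    subst hr1
    refine ⟨fun _ => 1, k - 1, ?_, ?_, ?_, ?_⟩
    · intro i; rw [Finset.mem_Icc]; clear hdvd; dsimp only; omega
    · rw [Finset.mem_Icc]; clear hdvd; omega
    · simp
    · simp [Nat.mod_one]
  · by_contra hcon
    push_neg at hcon
    have h2k : 2 * k ≤ r * k := mul_le_mul_left hr2 k
    have hkN : k - 1 ≤ r * k - 2 * r + 1 := by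
      generalize r * k = K at *; omega
    -- the key family of solutions
    have star : ∀ a c : ℕ, (r-1)*a + r*c + (k-1) ≤ r * k - 2 * r + 1 →
        χ ((r-1)*a + r*c + (k-1)) ≠ χ (a+1) := by
      intro a c hz heq
      have haa : a ≤ (r-1)*a := Nat.le_mul_of_pos_left a (by omega)
      have hcc : c ≤ r*c := Nat.le_mul_of_pos_left c (by omega)
      refine hcon (fun i => if i.val < r-1 then a+1 else if i.val < 2*r-1 then c+1 else 1)
        ((r-1)*a + r*c + (k-1)) ?_ ?_ ?_ ?_
      · intro i; rw [Finset.mem_Icc]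
        split_ifs <;>
          (constructor <;> (generalize (r-1)*a = X at *; generalize r*c = Y at *; omega))
      · rw [Finset.mem_Icc]
        constructor
        · generalize (r-1)*a = X at *; generalize r*c = Y at *; omega
        · exact hz
      · rw [Fin.sum_univ_eq_sum_range (fun j => if j < r-1 then a+1 else if j < 2*r-1 then c+1 else 1) (k-1),
          three_block_sum _ _ _ _ _ _ (by omega) (by omega)]
        have eB : 2*r-1-(r-1) = r := by omega
        have eC : k-1-(2*r-1) = k - 2*r := by omega
        rw [eB, eC]
        have e1 : (r-1)*(a+1) = (r-1)*a + (r-1) := by ring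
        have e2 : r*(c+1) = r*c + r := by ring
        rw [e1, e2]
        generalize (r-1)*a = X at *; generalize r*c = Y at *; omega
      · have hsplit : ∀ j : ℕ, χ (if j < r-1 then a+1 else if j < 2*r-1 then c+1 else 1)
            = if j < r-1 then χ (a+1) else if j < 2*r-1 then χ (c+1) else χ 1 := by
          intro j; split_ifs <;> rfl
        simp only [hsplit]
        rw [Fin.sum_univ_eq_sum_range (fun j => if j < r-1 then χ (a+1) else if j < 2*r-1 then χ (c+1) else χ 1) (k-1),
          three_block_sum _ _ _ _ _ _ (by omega) (by omega)]
        have eB : 2*r-1-(r-1) = r := by omega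
        rw [eB, h1, heq, mul_zero, add_zero]
        have e1 : r - 1 + 1 = r := by omega
        have e3 : (r-1)*χ (a+1) + r * χ (c+1) + χ (a+1) = r * (χ (a+1) + χ (c+1)) := by
          calc (r-1)*χ (a+1) + r * χ (c+1) + χ (a+1)
              = ((r-1)+1)*χ (a+1) + r * χ (c+1) := by ring
            _ = r*χ (a+1) + r * χ (c+1) := by rw [e1]
            _ = r * (χ (a+1) + χ (c+1)) := by ring
        rw [e3]
        exact Nat.mul_mod_right _ _
    -- the shift-by-r invariance
    have step : ∀ v, 1 ≤ v → v + r ≤ k - 1 → χ v = χ (v + r) := by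
      intro v hv1 hvr
      obtain ⟨w, rfl⟩ : ∃ w, v = w + 1 := ⟨v - 1, by omega⟩
      have hzle : (r-1)*w + r*(r-1) + (k-1) ≤ r*k - 2*r + 1 := by
        have h3 : (r-1)*(w+r) ≤ (r-1)*(k-2) := Nat.mul_le_mul_left _ (by omega)
        have h4 : (r-1)*w + r*(r-1) = (r-1)*(w+r) := by ring
        have key : ∀ u v : ℕ, (v + 1) + u * v + 2*(u+1) = (u+1)*(v+2) + 1 := by
          intro u v; ring
        have A2 : (k-1) + (r-1)*(k-2) + 2*r = r*k + 1 := by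
          have h5 := key (r-1) (k-2)
          have e1 : r - 1 + 1 = r := by omega
          have e2 : k - 2 + 2 = k := by omega
          have e3 : k - 2 + 1 = k - 1 := by omega
          rw [e1, e3, e2] at h5
          generalize (r-1)*(k-2) = X at *
          omega
        rw [h4]
        generalize (r-1)*(w+r) = X at *
        generalize (r-1)*(k-2) = Y at *
        generalize r*k = K at *
        omega
      have hA := star w (r-1) hzle
      have heq2 : (r-1)*(w+r) + r*0 + (k-1) = (r-1)*w + r*(r-1) + (k-1) := by ring
      have hB := star (w + r) 0 (by rw [heq2]; exact hzle)
      rw [heq2] at hB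
      have e : w + r + 1 = w + 1 + r := by omega
      rw [e] at hB
      have b1 : χ (w+1) ≤ 1 := hχ _ (Finset.mem_Icc.mpr ⟨by omega, by omega⟩)
      have b2 : χ (w+1+r) ≤ 1 := hχ _ (Finset.mem_Icc.mpr ⟨by omega, by omega⟩)
      have b3 : χ ((r-1)*w + r*(r-1) + (k-1)) ≤ 1 := by
        refine hχ _ (Finset.mem_Icc.mpr ⟨?_, hzle⟩)
        generalize (r-1)*w = X; omega
      omega
    obtain ⟨m, hm⟩ := hdvd
    have hm2 : 2 ≤ m := by
      have h5 : r * 2 ≤ r * m := by rw [← hm]; omega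
      exact Nat.le_of_mul_le_mul_left h5 hr
    have hind : ∀ s, r - 1 + r*s ≤ k - 1 → χ (r-1+r*s) = 0 := by
      intro s
      induction s with
      | zero => intro _; simpa using h2
      | succ n ih =>
        intro h
        have e : r*(n+1) = r*n + r := by ring
        have hle : r-1+r*n ≤ k-1 := by
          generalize r*(n+1) = X at *; generalize r*n = Y at *; omega
        have hstep := step (r-1+r*n) (by omega) (by
          generalize r*(n+1) = X at *; generalize r*n = Y at *; omega)
        have e2 : r-1+r*(n+1) = (r-1+r*n)+r := by
          generalize r*(n+1) = X at *; generalize r*n = Y at *; omega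
        rw [e2, ← hstep, ih hle]
    have emul : r*(m-1) + r = r*m := by
      rw [← Nat.mul_succ]; congr 1; omega
    have hk1 : r - 1 + r*(m-1) = k - 1 := by
      generalize r*(m-1) = P at *; generalize r*m = Q at *; omega
    have hz0 : χ (k-1) = 0 := by
      have h6 := hind (m-1) (by rw [hk1])
      rwa [hk1] at h6
    have hne := star 0 0 (by simp only [Nat.mul_zero, Nat.zero_add]; exact hkN)
    simp only [Nat.mul_zero, Nat.zero_add] at hne
    exact hne (by rw [hz0, h1])
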